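/- Let N ≥ 2 be an integer, λ > 0 real, k ∈ ℕ, and fix y ∈ ℝ^N∖{0}. Then for all x ∈ ℝ^N∖{0}, Δ_x [ C^λ_k(w)·‖x‖^k ] = 2λ(2λ+2−N)·C^{λ+1}_{k−2}(w)·‖x‖^{k−2}. In particular, if λ = (N−2)/2 (and N ≥ 3), the function x ↦ C^λ_k(w)‖x‖^k is harmonic on ℝ^N∖{0}. -/

import Mathlib

open scoped RealInnerProductSpace

/-- The Gegenbauer polynomial `C_k^λ(z)` given by its explicit sum. -/
noncomputable def gegenbauer (k : ℕ) (l : ℝ) (z : ℝ) : ℝ :=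
  ∑ j ∈ Finset.range (k / 2 + 1),
    (-1 : ℝ) ^ j * (Real.Gamma ((k : ℝ) - j + l) /
      (Real.Gamma l * (Nat.factorial j) * (Nat.factorial (k - 2 * j)))) * (2 * z) ^ (k - 2 * j)

/-- Gegenbauer polynomials with the convention `C^λ_j = 0` for `j < 0`. -/
noncomputable def gegenbauerZ (k : ℤ) (l : ℝ) (z : ℝ) : ℝ :=
  if k < 0 then 0 else gegenbauer k.toNat l z

/-- The Euclidean Laplacian: the sum of the second partial derivatives. -/
noncomputable def lap {N : ℕ} (f : EuclideanSpace ℝ (Fin N) → ℝ)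
    (x : EuclideanSpace ℝ (Fin N)) : ℝ :=
  ∑ i : Fin N, fderiv ℝ (fun z => fderiv ℝ f z (EuclideanSpace.single i 1)) x
    (EuclideanSpace.single i 1)

/-- `Δ_x` acting on a function of two variables. -/
noncomputable def lapX {N : ℕ}
    (F : EuclideanSpace ℝ (Fin N) → EuclideanSpace ℝ (Fin N) → ℝ) :
    EuclideanSpace ℝ (Fin N) → EuclideanSpace ℝ (Fin N) → ℝ :=
  fun x y => lap (fun x' => F x' y) x

/-- `Δ_y` acting on a function of two variables. -/
noncomputable def lapY {N : ℕ}
    (F : EuclideanSpace ℝ (Fin N) → EuclideanSpace ℝ (Fin N) → ℝ) :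
    EuclideanSpace ℝ (Fin N) → EuclideanSpace ℝ (Fin N) → ℝ :=
  fun x y => lap (F x) y

section Aux

variable {N : ℕ}
local notation "E" => EuclideanSpace ℝ (Fin N)

lemma diffφ (y : E) : Differentiable ℝ (fun x : E => ⟪x, y⟫) :=
  differentiable_id.inner ℝ (differentiable_const y)
lemma diffψ : Differentiable ℝ (fun x : E => ⟪x, x⟫) :=
  differentiable_id.inner ℝ differentiable_id
lemma diffι (w : E) : Differentiable ℝ (fun x : E => ⟪w, x⟫) :=
  (differentiable_const w).inner ℝ differentiable_id

lemma dφ (y z v : E) : fderiv ℝ (fun x : E => ⟪x, y⟫) z v = ⟪v, y⟫ := by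
  rw [fderiv_inner_apply ℝ differentiableAt_fun_id (differentiableAt_const y) v]; simp
lemma dψ (z v : E) : fderiv ℝ (fun x : E => ⟪x, x⟫) z v = 2 * ⟪v, z⟫ := by
  rw [fderiv_inner_apply ℝ differentiableAt_fun_id differentiableAt_fun_id v]
  simp [real_inner_comm, two_mul]
lemma dι (w z v : E) : fderiv ℝ (fun x : E => ⟪w, x⟫) z v = ⟪w, v⟫ := by
  rw [fderiv_inner_apply ℝ (differentiableAt_const w) differentiableAt_fun_id v]; simp

lemma fderiv_pow_apply {F : Type*} [NormedAddCommGroup F] [NormedSpace ℝ F]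
    (f : F → ℝ) (z : F) (hf : DifferentiableAt ℝ f z) (n : ℕ) (v : F) :
    fderiv ℝ (fun x => f x ^ n) z v = n * f z ^ (n - 1) * fderiv ℝ f z v := by
  have h := (hasDerivAt_pow n (f z)).comp_hasFDerivAt z hf.hasFDerivAt
  rw [show (fun x => f x ^ n) = (fun x => x ^ n) ∘ f from rfl, h.fderiv]
  simp [mul_assoc]

lemma dDouble (y : E) (p q : ℕ) (x e : E) :
    fderiv ℝ (fun z : E => ⟪z, y⟫ ^ p * ⟪z, z⟫ ^ q) x e =
      (p : ℝ) * ⟪x, y⟫ ^ (p - 1) * ⟪e, y⟫ * ⟪x, x⟫ ^ q +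
      ⟪x, y⟫ ^ p * ((q : ℝ) * ⟪x, x⟫ ^ (q - 1) * (2 * ⟪e, x⟫)) := by
  rw [fderiv_fun_mul (((diffφ y) x).fun_pow p) ((diffψ x).fun_pow q)]
  simp only [ContinuousLinearMap.add_apply, ContinuousLinearMap.smul_apply, smul_eq_mul]
  rw [fderiv_pow_apply (fun x : E => ⟪x, y⟫) x ((diffφ y) x) p e,
    fderiv_pow_apply (fun x : E => ⟪x, x⟫) x (diffψ x) q e, dφ, dψ]
  ring

lemma dTriple (y w : E) (p q : ℕ) (x e : E) :
    fderiv ℝ (fun z : E => ⟪z, y⟫ ^ p * (⟪z, z⟫ ^ q * ⟪w, z⟫)) x e =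
      (p : ℝ) * ⟪x, y⟫ ^ (p - 1) * ⟪e, y⟫ * (⟪x, x⟫ ^ q * ⟪w, x⟫) +
      ⟪x, y⟫ ^ p * ((q : ℝ) * ⟪x, x⟫ ^ (q - 1) * (2 * ⟪e, x⟫) * ⟪w, x⟫ +
        ⟪x, x⟫ ^ q * ⟪w, e⟫) := by
  rw [fderiv_fun_mul (((diffφ y) x).fun_pow p) (((diffψ x).fun_pow q).fun_mul ((diffι w) x))]
  simp only [ContinuousLinearMap.add_apply, ContinuousLinearMap.smul_apply, smul_eq_mul]
  rw [fderiv_fun_mul ((diffψ x).fun_pow q) ((diffι w) x)]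
  simp only [ContinuousLinearMap.add_apply, ContinuousLinearMap.smul_apply, smul_eq_mul]
  rw [fderiv_pow_apply (fun x : E => ⟪x, y⟫) x ((diffφ y) x) p e,
    fderiv_pow_apply (fun x : E => ⟪x, x⟫) x (diffψ x) q e, dφ, dψ, dι]
  ring

/-- The basic monomial building block. -/
noncomputable def G (y : E) (m j : ℕ) : E → ℝ := fun x => ⟪x, y⟫ ^ m * ⟪x, x⟫ ^ j

lemma diffG (y : E) (m j : ℕ) : Differentiable ℝ (G y m j) :=
  ((diffφ y).pow m).mul (diffψ.pow j)

lemma dG_fun (y : E) (m j : ℕ) (e : E) :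
    (fun z : E => fderiv ℝ (G y m j) z e) =
      fun z => ((m : ℝ) * ⟪e, y⟫) * (⟪z, y⟫ ^ (m - 1) * ⟪z, z⟫ ^ j) +
        (2 * (j : ℝ)) * (⟪z, y⟫ ^ m * (⟪z, z⟫ ^ (j - 1) * ⟪e, z⟫)) := by
  funext z
  rw [show G y m j = fun x : E => ⟪x, y⟫ ^ m * ⟪x, x⟫ ^ j from rfl, dDouble]
  ring

lemma diffdG (y : E) (m j : ℕ) (e : E) :
    Differentiable ℝ (fun z : E => fderiv ℝ (G y m j) z e) := by
  rw [dG_fun]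
  exact ((((diffφ y).pow _).mul (diffψ.pow _)).const_mul _).add
    ((((diffφ y).pow _).mul ((diffψ.pow _).mul (diffι e))).const_mul _)

lemma d2G (y : E) (m j : ℕ) (x e : E) :
    fderiv ℝ (fun z : E => fderiv ℝ (G y m j) z e) x e =
      ((m : ℝ) * ⟪e, y⟫) *
        (((m - 1 : ℕ) : ℝ) * ⟪x, y⟫ ^ (m - 1 - 1) * ⟪e, y⟫ * ⟪x, x⟫ ^ j +
          ⟪x, y⟫ ^ (m - 1) * ((j : ℝ) * ⟪x, x⟫ ^ (j - 1) * (2 * ⟪e, x⟫))) +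
      (2 * (j : ℝ)) *
        ((m : ℝ) * ⟪x, y⟫ ^ (m - 1) * ⟪e, y⟫ * (⟪x, x⟫ ^ (j - 1) * ⟪e, x⟫) +
          ⟪x, y⟫ ^ m * (((j - 1 : ℕ) : ℝ) * ⟪x, x⟫ ^ (j - 1 - 1) * (2 * ⟪e, x⟫) * ⟪e, x⟫ +
            ⟪x, x⟫ ^ (j - 1) * ⟪e, e⟫)) := by
  rw [dG_fun]
  rw [fderiv_fun_add ((((diffφ y).fun_pow _).fun_mul (diffψ.fun_pow _)).const_mul _ |>.differentiableAt)
      ((((diffφ y).fun_pow _).fun_mul ((diffψ.fun_pow _).fun_mul (diffι e))).const_mul _ |>.differentiableAt)]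
  simp only [ContinuousLinearMap.add_apply]
  rw [fderiv_const_mul ((((diffφ y).fun_pow _).fun_mul (diffψ.fun_pow _)) x) ((m : ℝ) * ⟪e, y⟫),
    fderiv_const_mul ((((diffφ y).fun_pow _).fun_mul ((diffψ.fun_pow _).fun_mul (diffι e))) x) (2 * (j : ℝ))]
  simp only [ContinuousLinearMap.smul_apply, smul_eq_mul]
  rw [dDouble, dTriple]

lemma inner_single (i : Fin N) (v : E) :
    ⟪(EuclideanSpace.single i (1:ℝ) : E), v⟫ = v i := by
  rw [EuclideanSpace.inner_single_left]; simp

lemma sum_single_mul (v w : E) :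
    ∑ i : Fin N, v i * w i = ⟪v, w⟫ := by
  rw [PiLp.inner_apply]; simp [RCLike.inner_apply]
  exact Finset.sum_congr rfl fun i _ => mul_comm _ _

lemma aux_mm (t : ℝ) (m : ℕ) : (m : ℝ) * (((m - 1 : ℕ)) : ℝ) * t ^ (m - 1 - 1) =
    (m : ℝ) * ((m : ℝ) - 1) * t ^ (m - 2) := by
  match m with
  | 0 => simp
  | (m + 1) => push_cast; norm_num

lemma aux_pm (t : ℝ) (m : ℕ) : (m : ℝ) * (t ^ (m - 1) * t) = (m : ℝ) * t ^ m := by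
  match m with
  | 0 => simp
  | (m + 1) => rw [Nat.add_sub_cancel, ← pow_succ]

lemma aux_jj (t : ℝ) (j : ℕ) : (j : ℝ) * (((j - 1 : ℕ)) : ℝ) * (t ^ (j - 1 - 1) * t) =
    (j : ℝ) * ((j : ℝ) - 1) * t ^ (j - 1) := by
  match j with
  | 0 => simp
  | 1 => simp
  | (j + 2) => push_cast; rw [← pow_succ]; ring

lemma lap_G (y : E) (m j : ℕ) (x : E) :
    lap (G y m j) x =
      (m : ℝ) * ((m : ℝ) - 1) * (⟪x, y⟫ ^ (m - 2) * ⟪x, x⟫ ^ j) * ⟪y, y⟫ +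
      (4 * (m : ℝ) * (j : ℝ) + 4 * (j : ℝ) * ((j : ℝ) - 1) + 2 * (N : ℝ) * (j : ℝ)) *
        (⟪x, y⟫ ^ m * ⟪x, x⟫ ^ (j - 1)) := by
  have key : ∀ i : Fin N,
      fderiv ℝ (fun z => fderiv ℝ (G y m j) z (EuclideanSpace.single i 1)) x
        (EuclideanSpace.single i 1)
      = ((m : ℝ) * ((m - 1 : ℕ) : ℝ) * ⟪x, y⟫ ^ (m - 1 - 1) * ⟪x, x⟫ ^ j) * (y i * y i)
        + (4 * (m : ℝ) * (j : ℝ) * (⟪x, y⟫ ^ (m - 1) * ⟪x, x⟫ ^ (j - 1))) * (x i * y i)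
        + ((j : ℝ) * ((j - 1 : ℕ) : ℝ) * 4 * (⟪x, y⟫ ^ m * ⟪x, x⟫ ^ (j - 1 - 1))) * (x i * x i)
        + 2 * (j : ℝ) * (⟪x, y⟫ ^ m * ⟪x, x⟫ ^ (j - 1)) := by
    intro i
    have h1 : (EuclideanSpace.single i (1:ℝ) : E) i = 1 := by simp
    rw [d2G, inner_single, inner_single, inner_single, h1]
    ring
  unfold lap
  rw [Finset.sum_congr rfl fun i _ => key i]
  rw [Finset.sum_add_distrib, Finset.sum_add_distrib, Finset.sum_add_distrib,
    ← Finset.mul_sum, ← Finset.mul_sum, ← Finset.mul_sum, sum_single_mul, sum_single_mul,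
    sum_single_mul, Finset.sum_const, Finset.card_univ, Fintype.card_fin, nsmul_eq_mul]
  have h1 := aux_mm ⟪x, y⟫ m
  have h2 := aux_pm ⟪x, y⟫ m
  have h3 := aux_jj ⟪x, x⟫ j
  linear_combination (⟪x, x⟫ ^ j * ⟪y, y⟫) * h1 + (4 * (j : ℝ) * ⟪x, x⟫ ^ (j - 1)) * h2 +
    (4 * ⟪x, y⟫ ^ m) * h3

lemma lap_comb (y : E) (n : ℕ) (C : ℕ → ℝ) (mm : ℕ → ℕ) (x : E) :
    lap (fun z => ∑ t ∈ Finset.range n, C t * G y (mm t) t z) x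
      = ∑ t ∈ Finset.range n, C t * lap (G y (mm t) t) x := by
  have hstep1 : ∀ (z e : E),
      fderiv ℝ (fun z' => ∑ t ∈ Finset.range n, C t * G y (mm t) t z') z e
      = ∑ t ∈ Finset.range n, C t * fderiv ℝ (G y (mm t) t) z e := by
    intro z e
    rw [fderiv_fun_sum (fun t _ => ((diffG y (mm t) t).const_mul (C t)).differentiableAt)]
    rw [ContinuousLinearMap.sum_apply]
    refine Finset.sum_congr rfl fun t _ => ?_
    rw [fderiv_const_mul ((diffG y (mm t) t) z) (C t)]; simp
  unfold lap
  have hstep2 : ∀ i : Fin N,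
      fderiv ℝ (fun z => fderiv ℝ (fun z' => ∑ t ∈ Finset.range n, C t * G y (mm t) t z') z
          (EuclideanSpace.single i 1)) x (EuclideanSpace.single i 1)
      = ∑ t ∈ Finset.range n, C t *
          fderiv ℝ (fun z => fderiv ℝ (G y (mm t) t) z (EuclideanSpace.single i 1)) x
            (EuclideanSpace.single i 1) := by
    intro i
    rw [show (fun z : E => fderiv ℝ (fun z' => ∑ t ∈ Finset.range n, C t * G y (mm t) t z') z
          (EuclideanSpace.single i 1))
        = fun z : E => ∑ t ∈ Finset.range n, C t * fderiv ℝ (G y (mm t) t) z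
            (EuclideanSpace.single i 1)
      from funext fun z => hstep1 z _]
    rw [fderiv_fun_sum (fun t _ => ((diffdG y (mm t) t _).const_mul (C t)).differentiableAt)]
    rw [ContinuousLinearMap.sum_apply]
    refine Finset.sum_congr rfl fun t _ => ?_
    rw [fderiv_const_mul ((diffdG y (mm t) t _) x) (C t)]; simp
  rw [Finset.sum_congr rfl fun i _ => hstep2 i, Finset.sum_comm]
  exact Finset.sum_congr rfl fun t _ => by rw [Finset.mul_sum]

lemma pow_term (u r c : ℝ) (hr : r ≠ 0) (hc : c ≠ 0) (m j : ℕ) :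
    (2 * (u / (r * c))) ^ m * r ^ (m + 2 * j) = (2 / c) ^ m * (u ^ m * (r ^ 2) ^ j) := by
  have h : 2 * (u / (r * c)) = (2/c) * (u/r) := by field_simp
  rw [h, mul_pow, div_pow u r, pow_add, pow_mul]
  field_simp

lemma coeff_ident (l : ℝ) (hl : 0 < l) (Nr : ℝ) (m t : ℕ) (c : ℝ) (hc : c ≠ 0) (X : ℝ) :
    ((-1:ℝ)^t * (Real.Gamma ((m:ℝ)+(t:ℝ)+2+l) /
        (Real.Gamma l * (Nat.factorial t) * (Nat.factorial (m+2)))) * (2/c)^(m+2))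
      * (((m+2:ℕ):ℝ) * (((m+2:ℕ):ℝ) - 1) * X * (c^2))
    + ((-1:ℝ)^(t+1) * (Real.Gamma ((m:ℝ)+(t:ℝ)+1+l) /
        (Real.Gamma l * (Nat.factorial (t+1)) * (Nat.factorial m))) * (2/c)^m)
      * ((4*(m:ℝ)*((t+1:ℕ):ℝ) + 4*((t+1:ℕ):ℝ)*(((t+1:ℕ):ℝ)-1) + 2*Nr*((t+1:ℕ):ℝ)) * X)
    = 2*l*(2*l+2-Nr) * ((-1:ℝ)^t * (Real.Gamma ((m:ℝ)+(t:ℝ)+1+l) /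
        (Real.Gamma (l+1) * (Nat.factorial t) * (Nat.factorial m))) * (2/c)^m) * X := by
  have hg : Real.Gamma ((m:ℝ)+(t:ℝ)+2+l) = ((m:ℝ)+(t:ℝ)+1+l) * Real.Gamma ((m:ℝ)+(t:ℝ)+1+l) := by
    rw [show (m:ℝ)+(t:ℝ)+2+l = ((m:ℝ)+(t:ℝ)+1+l) + 1 by ring, Real.Gamma_add_one (by positivity)]
  have h1 : Real.Gamma l ≠ 0 := (Real.Gamma_pos_of_pos hl).ne'
  have h2 : ((Nat.factorial t : ℕ) : ℝ) ≠ 0 := Nat.cast_ne_zero.mpr t.factorial_ne_zero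
  have h3 : ((Nat.factorial m : ℕ) : ℝ) ≠ 0 := Nat.cast_ne_zero.mpr m.factorial_ne_zero
  have hG : Real.Gamma ((m:ℝ)+(t:ℝ)+1+l) ≠ 0 := (Real.Gamma_pos_of_pos (by positivity)).ne'
  rw [hg, Real.Gamma_add_one hl.ne',
    show Nat.factorial (m+2) = (m+2)*((m+1)*Nat.factorial m) from rfl,
    Nat.factorial_succ t, pow_succ, pow_add]
  push_cast
  field_simp
  ring

lemma expand_eq (y : E) (hy : y ≠ 0) (l' : ℝ) (k : ℕ) (z : E) (hz : z ≠ 0) :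
    gegenbauer k l' (⟪z, y⟫ / (‖z‖ * ‖y‖)) * ‖z‖ ^ k
    = ∑ t ∈ Finset.range (k / 2 + 1),
        ((-1:ℝ)^t * (Real.Gamma ((k:ℝ) - t + l') /
          (Real.Gamma l' * (Nat.factorial t) * (Nat.factorial (k - 2*t)))) * (2/‖y‖)^(k-2*t))
          * G y (k - 2*t) t z := by
  unfold gegenbauer
  rw [Finset.sum_mul]
  refine Finset.sum_congr rfl fun t ht => ?_
  have h2t : 2 * t ≤ k := by
    have := Finset.mem_range.mp ht; omega
  have hk : (k - 2*t) + 2*t = k := by omega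
  have hzn : ‖z‖ ≠ 0 := norm_ne_zero_iff.mpr hz
  have hyn : ‖y‖ ≠ 0 := norm_ne_zero_iff.mpr hy
  have hG : G y (k - 2*t) t z = ⟪z, y⟫ ^ (k - 2*t) * (‖z‖^2)^t := by
    unfold G; rw [real_inner_self_eq_norm_sq]
  rw [hG, show ‖z‖ ^ k = ‖z‖ ^ ((k - 2*t) + 2*t) from by rw [hk], mul_assoc,
    pow_term ⟪z, y⟫ ‖z‖ ‖y‖ hzn hyn (k - 2*t) t]
  ring

end Aux

lemma gegenbauerZ_natCast (k : ℕ) (l z : ℝ) : gegenbauerZ (k : ℤ) l z = gegenbauer k l z := by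
  unfold gegenbauerZ
  rw [if_neg (not_lt.mpr (Int.natCast_nonneg k)), Int.toNat_natCast]

lemma gegenbauerZ_neg {a : ℤ} (h : a < 0) (l z : ℝ) : gegenbauerZ a l z = 0 := by
  unfold gegenbauerZ; rw [if_pos h]

lemma sum_pairing (n : ℕ) (A P Q R : ℕ → ℝ)
    (hsplit : ∀ t, t < n + 1 → A t = P t + Q t)
    (hP : P n = 0) (hQ : Q 0 = 0) (h : ∀ t, t < n → P t + Q (t + 1) = R t) :
    ∑ t ∈ Finset.range (n + 1), A t = ∑ t ∈ Finset.range n, R t := by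
  rw [Finset.sum_congr rfl (fun t ht => hsplit t (Finset.mem_range.mp ht))]
  rw [Finset.sum_add_distrib, Finset.sum_range_succ, hP, add_zero, Finset.sum_range_succ',
    hQ, add_zero, ← Finset.sum_add_distrib]
  exact Finset.sum_congr rfl fun t ht => h t (Finset.mem_range.mp ht)

theorem stmt15 (N : ℕ) (hN : 2 ≤ N) (l : ℝ) (hl : 0 < l) (k : ℕ)
    (y : EuclideanSpace ℝ (Fin N)) (hy : y ≠ 0)
    (f : EuclideanSpace ℝ (Fin N) → ℝ)
    (hf : ∀ x, f x = gegenbauerZ (k : ℤ) l (⟪x, y⟫ / (‖x‖ * ‖y‖)) * ‖x‖ ^ k)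
    (x : EuclideanSpace ℝ (Fin N)) (hx : x ≠ 0) :
    lap f x =
      2 * l * (2 * l + 2 - N) * gegenbauerZ ((k : ℤ) - 2) (l + 1) (⟪x, y⟫ / (‖x‖ * ‖y‖)) *
        ‖x‖ ^ ((k : ℤ) - 2) ∧
    (3 ≤ N → l = ((N : ℝ) - 2) / 2 → lap f x = 0) := by
  have hxn : ‖x‖ ≠ 0 := norm_ne_zero_iff.mpr hx
  have hyn : ‖y‖ ≠ 0 := norm_ne_zero_iff.mpr hy
  set CC : ℕ → ℝ := fun t => (-1:ℝ)^t * (Real.Gamma ((k:ℝ) - t + l) /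
      (Real.Gamma l * (Nat.factorial t) * (Nat.factorial (k - 2*t)))) * (2/‖y‖)^(k-2*t)
    with hCC
  have hfF : ∀ z : EuclideanSpace ℝ (Fin N), z ≠ 0 →
      f z = ∑ t ∈ Finset.range (k/2+1), CC t * G y (k - 2*t) t z := by
    intro z hz
    rw [hf z, gegenbauerZ_natCast]
    simp only [hCC]
    exact expand_eq y hy l k z hz
  have hlap : lap f x = ∑ t ∈ Finset.range (k/2+1), CC t * lap (G y (k-2*t) t) x := by
    have hev : ∀ e : EuclideanSpace ℝ (Fin N),
        (fun z => fderiv ℝ f z e) =ᶠ[nhds x]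
        (fun z => fderiv ℝ (fun z' => ∑ t ∈ Finset.range (k/2+1), CC t * G y (k-2*t) t z') z e) := by
      intro e
      have hmem : ({(0:EuclideanSpace ℝ (Fin N))}ᶜ : Set _) ∈ nhds x :=
        isOpen_compl_singleton.mem_nhds (by simpa using hx)
      filter_upwards [hmem] with z hz
      have hzz : z ≠ 0 := by simpa using hz
      have hev2 : f =ᶠ[nhds z]
          (fun z' => ∑ t ∈ Finset.range (k/2+1), CC t * G y (k-2*t) t z') :=
        Filter.eventuallyEq_of_mem (isOpen_compl_singleton.mem_nhds (by simpa using hzz))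
          (fun w hw => hfF w (by simpa using hw))
      rw [hev2.fderiv_eq]
    have h1 : lap f x
        = lap (fun z' => ∑ t ∈ Finset.range (k/2+1), CC t * G y (k-2*t) t z') x := by
      unfold lap
      exact Finset.sum_congr rfl fun i _ => by
        rw [(hev (EuclideanSpace.single i 1)).fderiv_eq]
    rw [h1]
    exact lap_comb y (k/2+1) CC (fun t => k - 2*t) x
  rcases Nat.lt_or_ge k 2 with hk2 | hk2
  · -- k = 0 or 1
    have h0 : lap f x = 0 := by
      interval_cases k
      · rw [hlap, show (0:ℕ)/2+1 = 1 from rfl, Finset.sum_range_one, lap_G]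
        norm_num
      · rw [hlap, show (1:ℕ)/2+1 = 1 from rfl, Finset.sum_range_one, lap_G]
        norm_num
    have hzero : gegenbauerZ ((k:ℤ) - 2) (l + 1) (⟪x, y⟫ / (‖x‖ * ‖y‖)) = 0 := by
      apply gegenbauerZ_neg; omega
    rw [h0, hzero]
    exact ⟨by ring, fun _ _ => rfl⟩
  · obtain ⟨K, rfl⟩ : ∃ K, k = K + 2 := ⟨k - 2, by omega⟩
    have hmain : lap f x =
        2 * l * (2 * l + 2 - N) *
          gegenbauerZ (((K+2:ℕ):ℤ) - 2) (l + 1) (⟪x, y⟫ / (‖x‖ * ‖y‖)) *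
          ‖x‖ ^ (((K+2:ℕ):ℤ) - 2) := by
      have hzc : ((K+2:ℕ):ℤ) - 2 = (K:ℤ) := by push_cast; ring
      have hRHS : gegenbauerZ (((K+2:ℕ):ℤ) - 2) (l + 1) (⟪x, y⟫ / (‖x‖ * ‖y‖)) *
          ‖x‖ ^ (((K+2:ℕ):ℤ) - 2)
          = ∑ t ∈ Finset.range (K/2+1),
              ((-1:ℝ)^t * (Real.Gamma ((K:ℝ) - t + (l+1)) /
                (Real.Gamma (l+1) * (Nat.factorial t) * (Nat.factorial (K - 2*t)))) *
                (2/‖y‖)^(K-2*t)) * G y (K - 2*t) t x := by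
        rw [hzc, gegenbauerZ_natCast, zpow_natCast]
        exact expand_eq y hy (l+1) K x hx
      have hkey : ∀ t, t < K/2 + 1 →
          CC t * ((((K+2-2*t:ℕ)):ℝ) * ((((K+2-2*t:ℕ)):ℝ) - 1) *
              (⟪x, y⟫ ^ (K+2-2*t-2) * ⟪x, x⟫ ^ t) * ⟪y, y⟫)
          + CC (t+1) * ((4 * (((K+2-2*(t+1):ℕ)):ℝ) * (((t+1:ℕ)):ℝ) +
              4 * (((t+1:ℕ)):ℝ) * ((((t+1:ℕ)):ℝ) - 1) + 2 * (N:ℝ) * (((t+1:ℕ)):ℝ)) *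
              (⟪x, y⟫ ^ (K+2-2*(t+1)) * ⟪x, x⟫ ^ (t+1-1)))
          = 2*l*(2*l+2-(N:ℝ)) *
              (((-1:ℝ)^t * (Real.Gamma ((K:ℝ) - t + (l+1)) /
                (Real.Gamma (l+1) * (Nat.factorial t) * (Nat.factorial (K - 2*t)))) *
                (2/‖y‖)^(K-2*t)) * G y (K - 2*t) t x) := by
        intro t ht
        have h2t : 2*t ≤ K := by omega
        have hK : K = (K - 2*t) + 2*t := by omega
        set m := K - 2*t with hm
        simp only [hCC, G]
        simp only [show K+2-2*t = m+2 from by omega, show K+2-2*t-2 = m from by omega,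
          show K+2-2*(t+1) = m from by omega, Nat.add_sub_cancel,
          show K-2*t = m from by omega]
        rw [real_inner_self_eq_norm_sq y]
        rw [show ((K+2:ℕ):ℝ) - (t:ℝ) + l = (m:ℝ)+(t:ℝ)+2+l from by push_cast [hK]; push_cast [← hm]; ring,
          show ((K+2:ℕ):ℝ) - ((t+1:ℕ):ℝ) + l = (m:ℝ)+(t:ℝ)+1+l from by push_cast [hK]; push_cast [← hm]; ring,
          show ((K:ℕ):ℝ) - (t:ℝ) + (l+1) = (m:ℝ)+(t:ℝ)+1+l from by push_cast [hK]; push_cast [← hm]; ring]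
        linear_combination coeff_ident l hl (N:ℝ) m t ‖y‖ hyn (⟪x, y⟫ ^ m * ⟪x, x⟫ ^ t)
      have hpair := sum_pairing (K/2+1)
        (fun t => CC t * lap (G y (K+2-2*t) t) x)
        (fun t => CC t * ((((K+2-2*t:ℕ)):ℝ) * ((((K+2-2*t:ℕ)):ℝ) - 1) *
            (⟪x, y⟫ ^ (K+2-2*t-2) * ⟪x, x⟫ ^ t) * ⟪y, y⟫))
        (fun t => CC t * ((4 * (((K+2-2*t:ℕ)):ℝ) * ((t:ℕ):ℝ) +
            4 * ((t:ℕ):ℝ) * (((t:ℕ):ℝ) - 1) + 2 * (N:ℝ) * ((t:ℕ):ℝ)) *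
            (⟪x, y⟫ ^ (K+2-2*t) * ⟪x, x⟫ ^ (t-1))))
        (fun t => 2*l*(2*l+2-(N:ℝ)) *
            (((-1:ℝ)^t * (Real.Gamma ((K:ℝ) - t + (l+1)) /
              (Real.Gamma (l+1) * (Nat.factorial t) * (Nat.factorial (K - 2*t)))) *
              (2/‖y‖)^(K-2*t)) * G y (K - 2*t) t x))
        (fun t _ => by beta_reduce; rw [lap_G, mul_add])
        (by
          beta_reduce
          have ha : K+2-2*(K/2+1) = 0 ∨ K+2-2*(K/2+1) = 1 := by omega
          rcases ha with h | h <;> rw [h] <;> norm_num)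
        (by beta_reduce; norm_num)
        hkey
      rw [hlap, show (K+2)/2+1 = (K/2+1)+1 from by omega, hpair,
        mul_assoc (2*l*(2*l+2-(N:ℝ))), hRHS, Finset.mul_sum]
    refine ⟨hmain, fun _ hll => ?_⟩
    rw [hmain, hll]
    push_cast
    ring
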